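/- The Brehm–Kühnel complex M⁸₁₅ is 5-neighbourly: every 5-element subset of {1,…,15} is contained in some element of Facets (i.e., any 5 vertices of M⁸₁₅ span a simplex of the complex). -/

import Mathlib

set_option maxRecDepth 100000
set_option maxHeartbeats 4000000
set_option synthInstance.maxHeartbeats 1000000
set_option synthInstance.maxSize 5000


/-- P = (1 2 3 4 5)(6 7 8 9 10)(11 12 13 14 15); the label 15 corresponds to (15 : Fin 15) = 0. -/
def P : Equiv.Perm (Fin 15) :=
  c[(1 : Fin 15), 2, 3, 4, 5] * c[(6 : Fin 15), 7, 8, 9, 10] * c[(11 : Fin 15), 12, 13, 14, 15]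

/-- T = (3 10)(4 14)(5 8)(6 11)(7 12)(13 15). -/
def T : Equiv.Perm (Fin 15) :=
  c[(3 : Fin 15), 10] * c[(4 : Fin 15), 14] * c[(5 : Fin 15), 8] * c[(6 : Fin 15), 11] *
    c[(7 : Fin 15), 12] * c[(13 : Fin 15), 15]

/-- S = (1 6 11)(2 15 14)(3 13 8)(4 7 5)(9 12 10). -/
def S : Equiv.Perm (Fin 15) :=
  c[(1 : Fin 15), 6, 11] * c[(2 : Fin 15), 15, 14] * c[(3 : Fin 15), 13, 8] *
    c[(4 : Fin 15), 7, 5] * c[(9 : Fin 15), 12, 10]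

/-- R = (2 5)(3 4)(7 10)(8 9)(12 15)(13 14). -/
def R : Equiv.Perm (Fin 15) :=
  c[(2 : Fin 15), 5] * c[(3 : Fin 15), 4] * c[(7 : Fin 15), 10] * c[(8 : Fin 15), 9] *
    c[(12 : Fin 15), 15] * c[(13 : Fin 15), 14]

/-- U = (1 6 11)(2 7 12)(3 8 13)(4 9 14)(5 10 15). -/
def U : Equiv.Perm (Fin 15) :=
  c[(1 : Fin 15), 6, 11] * c[(2 : Fin 15), 7, 12] * c[(3 : Fin 15), 8, 13] *
    c[(4 : Fin 15), 9, 14] * c[(5 : Fin 15), 10, 15]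

/-- The twelve 9-element subsets spanning `𝒦₀` (labels in `Fin 15`, with 15 ↦ 0). -/
def A : Finset (Fin 15) := {1, 2, 3, 6, 8, 11, 13, 14, 15}
def B : Finset (Fin 15) := {1, 3, 6, 8, 9, 10, 11, 12, 13}
def C : Finset (Fin 15) := {1, 2, 6, 9, 10, 11, 12, 14, 15}
def D : Finset (Fin 15) := {1, 2, 3, 4, 7, 9, 12, 14, 15}
def E : Finset (Fin 15) := {1, 2, 4, 7, 9, 10, 12, 13, 14}
def F : Finset (Fin 15) := {1, 2, 6, 8, 9, 10, 11, 14, 15}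
def G : Finset (Fin 15) := {1, 2, 3, 4, 5, 6, 9, 11, 13}
def H : Finset (Fin 15) := {1, 3, 5, 6, 8, 9, 10, 11, 12}
def I : Finset (Fin 15) := {1, 3, 5, 6, 7, 8, 9, 10, 11}
def J : Finset (Fin 15) := {1, 2, 3, 4, 5, 7, 10, 12, 15}
def K : Finset (Fin 15) := {1, 2, 3, 7, 8, 10, 12, 13, 14}
def M : Finset (Fin 15) := {2, 5, 6, 7, 8, 9, 10, 13, 14}
/-- `L₍₁₎ = {3,4,6,7,11,12,13,14,15}`. -/
def L1 : Finset (Fin 15) := {3, 4, 6, 7, 11, 12, 13, 14, 15}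
/-- `N₍₁₎ = {3,4,6,7,10,12,13,14,15}`. -/
def N1 : Finset (Fin 15) := {3, 4, 6, 7, 10, 12, 13, 14, 15}

/-- The set of 8-dimensional (maximal) simplices of the Brehm--Kühnel complex `M⁸₁₅`:
all images `g·X` for `g ∈ 𝒢₁ = ⟨P, S⟩` and `X` among the fourteen listed 9-element sets. -/
def Facets : Set (Finset (Fin 15)) :=
  { Y | ∃ g ∈ (Subgroup.closure {P, S} : Subgroup (Equiv.Perm (Fin 15))),
      ∃ X ∈ ({A, B, C, D, E, F, G, H, I, J, K, M, L1, N1} : Set (Finset (Fin 15))),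
        Y = X.image g }

def gen' (b : Bool) : Equiv.Perm (Fin 15) := if b then P else S

theorem gen'_mem (b : Bool) : gen' b ∈ (Subgroup.closure {P, S} : Subgroup (Equiv.Perm (Fin 15))) := by
  cases b <;> apply Subgroup.subset_closure <;> simp [gen']

def wprod (l : List Bool) : Equiv.Perm (Fin 15) := (l.map gen').prod

theorem wprod_mem (l : List Bool) :
    wprod l ∈ (Subgroup.closure {P, S} : Subgroup (Equiv.Perm (Fin 15))) := by
  apply list_prod_mem
  intro x hx
  simp only [List.mem_map] at hx
  obtain ⟨b, _, rfl⟩ := hx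
  exact gen'_mem b

def covL : List (Finset (Fin 15)) := [
  ({1, 2, 3, 6, 8, 11, 13, 14, 15} : Finset (Fin 15)),
  ({1, 2, 4, 7, 9, 10, 12, 13, 14} : Finset (Fin 15)),
  ({5, 6, 7, 8, 9, 10, 11, 12, 15} : Finset (Fin 15)),
  ({1, 3, 4, 5, 6, 9, 11, 12, 13} : Finset (Fin 15)),
  ({1, 2, 3, 4, 5, 8, 10, 12, 15} : Finset (Fin 15)),
  ({2, 3, 5, 6, 7, 8, 10, 13, 14} : Finset (Fin 15)),
  ({2, 3, 4, 7, 9, 11, 12, 14, 15} : Finset (Fin 15)),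
  ({1, 5, 8, 9, 10, 11, 13, 14, 15} : Finset (Fin 15)),
  ({1, 3, 4, 6, 7, 8, 9, 14, 15} : Finset (Fin 15)),
  ({1, 2, 4, 6, 7, 8, 10, 11, 12} : Finset (Fin 15)),
  ({4, 5, 7, 8, 11, 12, 13, 14, 15} : Finset (Fin 15)),
  ({2, 4, 5, 6, 7, 9, 10, 13, 15} : Finset (Fin 15)),
  ({3, 4, 6, 8, 9, 10, 12, 13, 14} : Finset (Fin 15)),
  ({1, 2, 3, 5, 7, 9, 10, 11, 13} : Finset (Fin 15)),
  ({1, 3, 5, 6, 10, 11, 12, 14, 15} : Finset (Fin 15)),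
  ({1, 2, 5, 6, 7, 12, 13, 14, 15} : Finset (Fin 15)),
  ({2, 3, 4, 5, 8, 9, 11, 13, 14} : Finset (Fin 15)),
  ({3, 4, 6, 7, 10, 11, 12, 13, 15} : Finset (Fin 15)),
  ({1, 2, 6, 8, 9, 10, 12, 14, 15} : Finset (Fin 15)),
  ({1, 3, 4, 5, 7, 8, 10, 11, 14} : Finset (Fin 15)),
  ({2, 3, 8, 9, 10, 11, 12, 13, 15} : Finset (Fin 15)),
  ({2, 4, 5, 6, 7, 8, 9, 12, 14} : Finset (Fin 15)),
  ({1, 2, 3, 4, 7, 8, 12, 13, 15} : Finset (Fin 15)),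
  ({2, 4, 5, 6, 10, 11, 13, 14, 15} : Finset (Fin 15)),
  ({1, 2, 3, 5, 6, 7, 9, 11, 12} : Finset (Fin 15)),
  ({1, 3, 4, 5, 7, 9, 10, 14, 15} : Finset (Fin 15)),
  ({1, 3, 6, 7, 8, 9, 10, 11, 13} : Finset (Fin 15)),
  ({1, 4, 5, 6, 8, 9, 12, 13, 15} : Finset (Fin 15)),
  ({1, 2, 3, 4, 6, 9, 11, 14, 15} : Finset (Fin 15)),
  ({1, 2, 7, 8, 9, 11, 12, 13, 14} : Finset (Fin 15)),
  ({4, 6, 7, 8, 9, 10, 11, 14, 15} : Finset (Fin 15)),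
  ({1, 2, 4, 5, 6, 10, 12, 13, 14} : Finset (Fin 15)),
  ({1, 2, 3, 7, 10, 12, 13, 14, 15} : Finset (Fin 15)),
  ({3, 5, 6, 7, 8, 11, 12, 13, 14} : Finset (Fin 15)),
  ({2, 3, 4, 5, 6, 8, 9, 13, 15} : Finset (Fin 15)),
  ({1, 2, 4, 5, 8, 10, 11, 13, 15} : Finset (Fin 15)),
  ({1, 3, 4, 5, 9, 10, 11, 12, 14} : Finset (Fin 15)),
  ({2, 3, 6, 9, 10, 11, 12, 13, 14} : Finset (Fin 15)),
  ({1, 3, 5, 7, 8, 9, 10, 13, 15} : Finset (Fin 15)),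
  ({2, 3, 4, 5, 7, 10, 11, 12, 15} : Finset (Fin 15)),
  ({1, 2, 4, 6, 7, 11, 12, 13, 15} : Finset (Fin 15)),
  ({1, 2, 3, 5, 6, 8, 9, 12, 15} : Finset (Fin 15)),
  ({1, 5, 6, 7, 8, 10, 11, 14, 15} : Finset (Fin 15)),
  ({2, 4, 5, 7, 8, 9, 10, 11, 15} : Finset (Fin 15)),
  ({3, 4, 6, 7, 8, 9, 13, 14, 15} : Finset (Fin 15)),
  ({1, 4, 5, 7, 9, 12, 13, 14, 15} : Finset (Fin 15)),
  ({3, 4, 5, 9, 10, 11, 12, 13, 15} : Finset (Fin 15)),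
  ({1, 2, 3, 4, 5, 6, 8, 10, 14} : Finset (Fin 15)),
  ({1, 3, 4, 7, 8, 10, 12, 13, 14} : Finset (Fin 15)),
  ({1, 2, 4, 5, 7, 9, 10, 11, 14} : Finset (Fin 15)),
  ({2, 3, 5, 7, 8, 9, 11, 12, 13} : Finset (Fin 15)),
  ({2, 3, 5, 6, 8, 10, 13, 14, 15} : Finset (Fin 15)),
  ({4, 5, 6, 7, 8, 10, 11, 12, 14} : Finset (Fin 15)),
  ({2, 3, 4, 7, 8, 11, 12, 14, 15} : Finset (Fin 15)),
  ({1, 5, 7, 8, 9, 11, 12, 14, 15} : Finset (Fin 15)),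
  ({1, 2, 3, 4, 5, 6, 7, 13, 15} : Finset (Fin 15)),
  ({1, 2, 4, 6, 8, 9, 10, 11, 14} : Finset (Fin 15)),
  ({1, 2, 5, 6, 9, 11, 12, 13, 14} : Finset (Fin 15)),
  ({2, 3, 4, 7, 9, 10, 11, 13, 15} : Finset (Fin 15)),
  ({1, 3, 5, 6, 7, 9, 10, 11, 15} : Finset (Fin 15)),
  ({1, 3, 4, 6, 8, 10, 11, 12, 13} : Finset (Fin 15)),
  ({2, 4, 5, 6, 9, 10, 13, 14, 15} : Finset (Fin 15)),
  ({2, 3, 4, 5, 6, 8, 9, 12, 14} : Finset (Fin 15)),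
  ({2, 3, 6, 7, 8, 9, 10, 12, 13} : Finset (Fin 15)),
  ({4, 5, 6, 7, 10, 12, 13, 14, 15} : Finset (Fin 15)),
  ({2, 5, 6, 7, 8, 9, 10, 12, 15} : Finset (Fin 15)),
  ({2, 3, 4, 5, 8, 9, 11, 12, 15} : Finset (Fin 15)),
  ({1, 2, 5, 7, 8, 10, 11, 13, 14} : Finset (Fin 15)),
  ({1, 2, 3, 5, 6, 8, 11, 13, 14} : Finset (Fin 15)),
  ({1, 4, 5, 6, 10, 11, 12, 13, 15} : Finset (Fin 15)),
  ({1, 2, 3, 4, 7, 9, 12, 14, 15} : Finset (Fin 15)),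
  ({1, 2, 3, 4, 5, 7, 10, 12, 15} : Finset (Fin 15)),
  ({3, 4, 5, 8, 10, 11, 12, 13, 15} : Finset (Fin 15)),
  ({1, 3, 4, 7, 8, 9, 13, 14, 15} : Finset (Fin 15)),
  ({1, 4, 5, 6, 9, 11, 12, 13, 14} : Finset (Fin 15)),
  ({1, 2, 9, 10, 11, 12, 13, 14, 15} : Finset (Fin 15)),
  ({1, 2, 5, 6, 7, 11, 12, 13, 14} : Finset (Fin 15)),
  ({2, 4, 6, 7, 9, 10, 11, 13, 15} : Finset (Fin 15))]

theorem m0 : ({1, 2, 3, 6, 8, 11, 13, 14, 15} : Finset (Fin 15)) ∈ Facets :=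
  ⟨wprod [], wprod_mem _, A, by simp, by decide⟩
theorem m1 : ({1, 2, 4, 7, 9, 10, 12, 13, 14} : Finset (Fin 15)) ∈ Facets :=
  ⟨wprod [], wprod_mem _, E, by simp, by decide⟩
theorem m2 : ({5, 6, 7, 8, 9, 10, 11, 12, 15} : Finset (Fin 15)) ∈ Facets :=
  ⟨wprod [false, true], wprod_mem _, H, by simp, by decide⟩
theorem m3 : ({1, 3, 4, 5, 6, 9, 11, 12, 13} : Finset (Fin 15)) ∈ Facets :=
  ⟨wprod [false], wprod_mem _, I, by simp, by decide⟩
theorem m4 : ({1, 2, 3, 4, 5, 8, 10, 12, 15} : Finset (Fin 15)) ∈ Facets :=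
  ⟨wprod [false, true, false], wprod_mem _, G, by simp, by decide⟩
theorem m5 : ({2, 3, 5, 6, 7, 8, 10, 13, 14} : Finset (Fin 15)) ∈ Facets :=
  ⟨wprod [true, true], wprod_mem _, H, by simp, by decide⟩
theorem m6 : ({2, 3, 4, 7, 9, 11, 12, 14, 15} : Finset (Fin 15)) ∈ Facets :=
  ⟨wprod [true], wprod_mem _, A, by simp, by decide⟩
theorem m7 : ({1, 5, 8, 9, 10, 11, 13, 14, 15} : Finset (Fin 15)) ∈ Facets :=
  ⟨wprod [false, true], wprod_mem _, C, by simp, by decide⟩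
theorem m8 : ({1, 3, 4, 6, 7, 8, 9, 14, 15} : Finset (Fin 15)) ∈ Facets :=
  ⟨wprod [true, true, true], wprod_mem _, H, by simp, by decide⟩
theorem m9 : ({1, 2, 4, 6, 7, 8, 10, 11, 12} : Finset (Fin 15)) ∈ Facets :=
  ⟨wprod [false, true, true, true], wprod_mem _, A, by simp, by decide⟩
theorem m10 : ({4, 5, 7, 8, 11, 12, 13, 14, 15} : Finset (Fin 15)) ∈ Facets :=
  ⟨wprod [true], wprod_mem _, L1, by simp, by decide⟩
theorem m11 : ({2, 4, 5, 6, 7, 9, 10, 13, 15} : Finset (Fin 15)) ∈ Facets :=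
  ⟨wprod [false, true], wprod_mem _, G, by simp, by decide⟩
theorem m12 : ({3, 4, 6, 8, 9, 10, 12, 13, 14} : Finset (Fin 15)) ∈ Facets :=
  ⟨wprod [false, true, false, false], wprod_mem _, J, by simp, by decide⟩
theorem m13 : ({1, 2, 3, 5, 7, 9, 10, 11, 13} : Finset (Fin 15)) ∈ Facets :=
  ⟨wprod [false, true, false, false, true, true], wprod_mem _, L1, by simp, by decide⟩
theorem m14 : ({1, 3, 5, 6, 10, 11, 12, 14, 15} : Finset (Fin 15)) ∈ Facets :=
  ⟨wprod [false, true, true, false], wprod_mem _, J, by simp, by decide⟩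
theorem m15 : ({1, 2, 5, 6, 7, 12, 13, 14, 15} : Finset (Fin 15)) ∈ Facets :=
  ⟨wprod [false, true, true, true, false], wprod_mem _, I, by simp, by decide⟩
theorem m16 : ({2, 3, 4, 5, 8, 9, 11, 13, 14} : Finset (Fin 15)) ∈ Facets :=
  ⟨wprod [false, true, true], wprod_mem _, B, by simp, by decide⟩
theorem m17 : ({3, 4, 6, 7, 10, 11, 12, 13, 15} : Finset (Fin 15)) ∈ Facets :=
  ⟨wprod [true, false, false, true, true, true], wprod_mem _, L1, by simp, by decide⟩
theorem m18 : ({1, 2, 6, 8, 9, 10, 12, 14, 15} : Finset (Fin 15)) ∈ Facets :=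
  ⟨wprod [false, true, true, true], wprod_mem _, L1, by simp, by decide⟩
theorem m19 : ({1, 3, 4, 5, 7, 8, 10, 11, 14} : Finset (Fin 15)) ∈ Facets :=
  ⟨wprod [true, false, false, true], wprod_mem _, L1, by simp, by decide⟩
theorem m20 : ({2, 3, 8, 9, 10, 11, 12, 13, 15} : Finset (Fin 15)) ∈ Facets :=
  ⟨wprod [false, false, true, true, false], wprod_mem _, G, by simp, by decide⟩
theorem m21 : ({2, 4, 5, 6, 7, 8, 9, 12, 14} : Finset (Fin 15)) ∈ Facets :=
  ⟨wprod [false, false, true, true, false, false, true], wprod_mem _, K, by simp, by decide⟩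
theorem m22 : ({1, 2, 3, 4, 7, 8, 12, 13, 15} : Finset (Fin 15)) ∈ Facets :=
  ⟨wprod [false, false, true, true], wprod_mem _, B, by simp, by decide⟩
theorem m23 : ({2, 4, 5, 6, 10, 11, 13, 14, 15} : Finset (Fin 15)) ∈ Facets :=
  ⟨wprod [false, false, true, true, true, false], wprod_mem _, H, by simp, by decide⟩
theorem m24 : ({1, 2, 3, 5, 6, 7, 9, 11, 12} : Finset (Fin 15)) ∈ Facets :=
  ⟨wprod [true, false, false, true, true], wprod_mem _, E, by simp, by decide⟩
theorem m25 : ({1, 3, 4, 5, 7, 9, 10, 14, 15} : Finset (Fin 15)) ∈ Facets :=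
  ⟨wprod [false, true, true, true], wprod_mem _, E, by simp, by decide⟩
theorem m26 : ({1, 3, 6, 7, 8, 9, 10, 11, 13} : Finset (Fin 15)) ∈ Facets :=
  ⟨wprod [true, false], wprod_mem _, E, by simp, by decide⟩
theorem m27 : ({1, 4, 5, 6, 8, 9, 12, 13, 15} : Finset (Fin 15)) ∈ Facets :=
  ⟨wprod [false, false, true, false, false, true, true], wprod_mem _, L1, by simp, by decide⟩
theorem m28 : ({1, 2, 3, 4, 6, 9, 11, 14, 15} : Finset (Fin 15)) ∈ Facets :=
  ⟨wprod [true, false, false, true], wprod_mem _, K, by simp, by decide⟩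
theorem m29 : ({1, 2, 7, 8, 9, 11, 12, 13, 14} : Finset (Fin 15)) ∈ Facets :=
  ⟨wprod [false, false, true, true, false, false, true, true], wprod_mem _, C, by simp, by decide⟩
theorem m30 : ({4, 6, 7, 8, 9, 10, 11, 14, 15} : Finset (Fin 15)) ∈ Facets :=
  ⟨wprod [false, true, false, false, true], wprod_mem _, H, by simp, by decide⟩
theorem m31 : ({1, 2, 4, 5, 6, 10, 12, 13, 14} : Finset (Fin 15)) ∈ Facets :=
  ⟨wprod [true, true, false], wprod_mem _, M, by simp, by decide⟩
theorem m32 : ({1, 2, 3, 7, 10, 12, 13, 14, 15} : Finset (Fin 15)) ∈ Facets :=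
  ⟨wprod [true, true, false, false, true, true, true], wprod_mem _, I, by simp, by decide⟩
theorem m33 : ({3, 5, 6, 7, 8, 11, 12, 13, 14} : Finset (Fin 15)) ∈ Facets :=
  ⟨wprod [true, true, false, false, true, true, false, false, true], wprod_mem _, G, by simp, by decide⟩
theorem m34 : ({2, 3, 4, 5, 6, 8, 9, 13, 15} : Finset (Fin 15)) ∈ Facets :=
  ⟨wprod [false, false, true, true, false, false], wprod_mem _, F, by simp, by decide⟩
theorem m35 : ({1, 2, 4, 5, 8, 10, 11, 13, 15} : Finset (Fin 15)) ∈ Facets :=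
  ⟨wprod [false, false, true, true, true], wprod_mem _, H, by simp, by decide⟩
theorem m36 : ({1, 3, 4, 5, 9, 10, 11, 12, 14} : Finset (Fin 15)) ∈ Facets :=
  ⟨wprod [false, false, true], wprod_mem _, H, by simp, by decide⟩
theorem m37 : ({2, 3, 6, 9, 10, 11, 12, 13, 14} : Finset (Fin 15)) ∈ Facets :=
  ⟨wprod [false, true, false], wprod_mem _, N1, by simp, by decide⟩
theorem m38 : ({1, 3, 5, 7, 8, 9, 10, 13, 15} : Finset (Fin 15)) ∈ Facets :=
  ⟨wprod [true, false, false, true, true, false, false, true], wprod_mem _, K, by simp, by decide⟩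
theorem m39 : ({2, 3, 4, 5, 7, 10, 11, 12, 15} : Finset (Fin 15)) ∈ Facets :=
  ⟨wprod [true, true, false, false, true], wprod_mem _, K, by simp, by decide⟩
theorem m40 : ({1, 2, 4, 6, 7, 11, 12, 13, 15} : Finset (Fin 15)) ∈ Facets :=
  ⟨wprod [false, false, true, false], wprod_mem _, J, by simp, by decide⟩
theorem m41 : ({1, 2, 3, 5, 6, 8, 9, 12, 15} : Finset (Fin 15)) ∈ Facets :=
  ⟨wprod [false, true, false, false, true, true, true, false], wprod_mem _, L1, by simp, by decide⟩
theorem m42 : ({1, 5, 6, 7, 8, 10, 11, 14, 15} : Finset (Fin 15)) ∈ Facets :=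
  ⟨wprod [true, false], wprod_mem _, J, by simp, by decide⟩
theorem m43 : ({2, 4, 5, 7, 8, 9, 10, 11, 15} : Finset (Fin 15)) ∈ Facets :=
  ⟨wprod [false, true, false], wprod_mem _, H, by simp, by decide⟩
theorem m44 : ({3, 4, 6, 7, 8, 9, 13, 14, 15} : Finset (Fin 15)) ∈ Facets :=
  ⟨wprod [false, true, true, true], wprod_mem _, J, by simp, by decide⟩
theorem m45 : ({1, 4, 5, 7, 9, 12, 13, 14, 15} : Finset (Fin 15)) ∈ Facets :=
  ⟨wprod [true, true, true, false], wprod_mem _, F, by simp, by decide⟩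
theorem m46 : ({3, 4, 5, 9, 10, 11, 12, 13, 15} : Finset (Fin 15)) ∈ Facets :=
  ⟨wprod [true, true, false, false, true, true, false], wprod_mem _, I, by simp, by decide⟩
theorem m47 : ({1, 2, 3, 4, 5, 6, 8, 10, 14} : Finset (Fin 15)) ∈ Facets :=
  ⟨wprod [true, false, false, true, true, false, false, true, true], wprod_mem _, L1, by simp, by decide⟩
theorem m48 : ({1, 3, 4, 7, 8, 10, 12, 13, 14} : Finset (Fin 15)) ∈ Facets :=
  ⟨wprod [false, false, true, true], wprod_mem _, I, by simp, by decide⟩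
theorem m49 : ({1, 2, 4, 5, 7, 9, 10, 11, 14} : Finset (Fin 15)) ∈ Facets :=
  ⟨wprod [true, false, false, true, true], wprod_mem _, C, by simp, by decide⟩
theorem m50 : ({2, 3, 5, 7, 8, 9, 11, 12, 13} : Finset (Fin 15)) ∈ Facets :=
  ⟨wprod [false, false, true, false, false, true, true, true], wprod_mem _, D, by simp, by decide⟩
theorem m51 : ({2, 3, 5, 6, 8, 10, 13, 14, 15} : Finset (Fin 15)) ∈ Facets :=
  ⟨wprod [true], wprod_mem _, E, by simp, by decide⟩
theorem m52 : ({4, 5, 6, 7, 8, 10, 11, 12, 14} : Finset (Fin 15)) ∈ Facets :=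
  ⟨wprod [false, false, true, false, false], wprod_mem _, L1, by simp, by decide⟩
theorem m53 : ({2, 3, 4, 7, 8, 11, 12, 14, 15} : Finset (Fin 15)) ∈ Facets :=
  ⟨wprod [false, true, false, false, true, true], wprod_mem _, I, by simp, by decide⟩
theorem m54 : ({1, 5, 7, 8, 9, 11, 12, 14, 15} : Finset (Fin 15)) ∈ Facets :=
  ⟨wprod [true, true], wprod_mem _, N1, by simp, by decide⟩
theorem m55 : ({1, 2, 3, 4, 5, 6, 7, 13, 15} : Finset (Fin 15)) ∈ Facets :=
  ⟨wprod [false, false, true], wprod_mem _, N1, by simp, by decide⟩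
theorem m56 : ({1, 2, 4, 6, 8, 9, 10, 11, 14} : Finset (Fin 15)) ∈ Facets :=
  ⟨wprod [false, true, true, false, false], wprod_mem _, K, by simp, by decide⟩
theorem m57 : ({1, 2, 5, 6, 9, 11, 12, 13, 14} : Finset (Fin 15)) ∈ Facets :=
  ⟨wprod [true, false, false, true, true, true], wprod_mem _, I, by simp, by decide⟩
theorem m58 : ({2, 3, 4, 7, 9, 10, 11, 13, 15} : Finset (Fin 15)) ∈ Facets :=
  ⟨wprod [true, true, false], wprod_mem _, L1, by simp, by decide⟩
theorem m59 : ({1, 3, 5, 6, 7, 9, 10, 11, 15} : Finset (Fin 15)) ∈ Facets :=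
  ⟨wprod [true, false, false, true], wprod_mem _, A, by simp, by decide⟩
theorem m60 : ({1, 3, 4, 6, 8, 10, 11, 12, 13} : Finset (Fin 15)) ∈ Facets :=
  ⟨wprod [false, false, true, false], wprod_mem _, E, by simp, by decide⟩
theorem m61 : ({2, 4, 5, 6, 9, 10, 13, 14, 15} : Finset (Fin 15)) ∈ Facets :=
  ⟨wprod [false, false, true, true, false], wprod_mem _, D, by simp, by decide⟩
theorem m62 : ({2, 3, 4, 5, 6, 8, 9, 12, 14} : Finset (Fin 15)) ∈ Facets :=
  ⟨wprod [false, false, true, false], wprod_mem _, F, by simp, by decide⟩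
theorem m63 : ({2, 3, 6, 7, 8, 9, 10, 12, 13} : Finset (Fin 15)) ∈ Facets :=
  ⟨wprod [true, true, false, false, true, true], wprod_mem _, D, by simp, by decide⟩
theorem m64 : ({4, 5, 6, 7, 10, 12, 13, 14, 15} : Finset (Fin 15)) ∈ Facets :=
  ⟨wprod [true, true, false, false, true, true, false], wprod_mem _, G, by simp, by decide⟩
theorem m65 : ({2, 5, 6, 7, 8, 9, 10, 12, 15} : Finset (Fin 15)) ∈ Facets :=
  ⟨wprod [false], wprod_mem _, E, by simp, by decide⟩
theorem m66 : ({2, 3, 4, 5, 8, 9, 11, 12, 15} : Finset (Fin 15)) ∈ Facets :=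
  ⟨wprod [false], wprod_mem _, M, by simp, by decide⟩
theorem m67 : ({1, 2, 5, 7, 8, 10, 11, 13, 14} : Finset (Fin 15)) ∈ Facets :=
  ⟨wprod [false], wprod_mem _, L1, by simp, by decide⟩
theorem m68 : ({1, 2, 3, 5, 6, 8, 11, 13, 14} : Finset (Fin 15)) ∈ Facets :=
  ⟨wprod [false, true, false], wprod_mem _, D, by simp, by decide⟩
theorem m69 : ({1, 4, 5, 6, 10, 11, 12, 13, 15} : Finset (Fin 15)) ∈ Facets :=
  ⟨wprod [true, false, false], wprod_mem _, E, by simp, by decide⟩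
theorem m70 : ({1, 2, 3, 4, 7, 9, 12, 14, 15} : Finset (Fin 15)) ∈ Facets :=
  ⟨wprod [], wprod_mem _, D, by simp, by decide⟩
theorem m71 : ({1, 2, 3, 4, 5, 7, 10, 12, 15} : Finset (Fin 15)) ∈ Facets :=
  ⟨wprod [], wprod_mem _, J, by simp, by decide⟩
theorem m72 : ({3, 4, 5, 8, 10, 11, 12, 13, 15} : Finset (Fin 15)) ∈ Facets :=
  ⟨wprod [true, true], wprod_mem _, A, by simp, by decide⟩
theorem m73 : ({1, 3, 4, 7, 8, 9, 13, 14, 15} : Finset (Fin 15)) ∈ Facets :=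
  ⟨wprod [false, true], wprod_mem _, D, by simp, by decide⟩
theorem m74 : ({1, 4, 5, 6, 9, 11, 12, 13, 14} : Finset (Fin 15)) ∈ Facets :=
  ⟨wprod [true, true, true], wprod_mem _, A, by simp, by decide⟩
theorem m75 : ({1, 2, 9, 10, 11, 12, 13, 14, 15} : Finset (Fin 15)) ∈ Facets :=
  ⟨wprod [true, true, true], wprod_mem _, L1, by simp, by decide⟩
theorem m76 : ({1, 2, 5, 6, 7, 11, 12, 13, 14} : Finset (Fin 15)) ∈ Facets :=
  ⟨wprod [false, true, true], wprod_mem _, E, by simp, by decide⟩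
theorem m77 : ({2, 4, 6, 7, 9, 10, 11, 13, 15} : Finset (Fin 15)) ∈ Facets :=
  ⟨wprod [true, true, false], wprod_mem _, N1, by simp, by decide⟩

theorem covL_facets : ∀ t ∈ covL, t ∈ Facets := by
  intro t ht
  simp only [covL, List.mem_cons, List.not_mem_nil, or_false] at ht
  rcases ht with rfl|rfl|rfl|rfl|rfl|rfl|rfl|rfl|rfl|rfl|rfl|rfl|rfl|rfl|rfl|rfl|rfl|rfl|rfl|rfl|rfl|rfl|rfl|rfl|rfl|rfl|rfl|rfl|rfl|rfl|rfl|rfl|rfl|rfl|rfl|rfl|rfl|rfl|rfl|rfl|rfl|rfl|rfl|rfl|rfl|rfl|rfl|rfl|rfl|rfl|rfl|rfl|rfl|rfl|rfl|rfl|rfl|rfl|rfl|rfl|rfl|rfl|rfl|rfl|rfl|rfl|rfl|rfl|rfl|rfl|rfl|rfl|rfl|rfl|rfl|rfl|rfl|rfl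
  · exact m0
  · exact m1
  · exact m2
  · exact m3
  · exact m4
  · exact m5
  · exact m6
  · exact m7
  · exact m8
  · exact m9
  · exact m10
  · exact m11
  · exact m12
  · exact m13
  · exact m14
  · exact m15
  · exact m16
  · exact m17
  · exact m18
  · exact m19
  · exact m20
  · exact m21
  · exact m22
  · exact m23
  · exact m24
  · exact m25
  · exact m26
  · exact m27
  · exact m28
  · exact m29
  · exact m30
  · exact m31
  · exact m32
  · exact m33
  · exact m34
  · exact m35
  · exact m36
  · exact m37
  · exact m38
  · exact m39
  · exact m40
  · exact m41
  · exact m42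
  · exact m43
  · exact m44
  · exact m45
  · exact m46
  · exact m47
  · exact m48
  · exact m49
  · exact m50
  · exact m51
  · exact m52
  · exact m53
  · exact m54
  · exact m55
  · exact m56
  · exact m57
  · exact m58
  · exact m59
  · exact m60
  · exact m61
  · exact m62
  · exact m63
  · exact m64
  · exact m65
  · exact m66
  · exact m67
  · exact m68
  · exact m69
  · exact m70
  · exact m71
  · exact m72
  · exact m73
  · exact m74
  · exact m75
  · exact m76
  · exact m77


def covTab : List (List (List Nat)) := [
  [[], [0, 25, 27, 75, 4, 42, 40, 38, 28, 54, 14, 15, 22, 35, 59, 41, 32, 45, 69, 8, 18, 70], [6, 51, 11, 20, 23, 65, 66, 15, 22, 39, 18, 28, 40, 53, 61, 0, 4, 32, 34, 41, 55], [17, 44, 46, 51, 53, 25, 14, 72, 59, 38, 6, 41, 0, 20, 32, 34, 39], [10, 30, 64, 27, 46, 45, 69, 72], [2, 7, 64, 10, 45, 23, 27, 42, 61], [2, 30, 64, 44, 77, 0, 18, 27, 14, 17, 51], [2, 10, 30, 32, 38, 45, 58], [7, 20, 10, 18], [75], [75], [10], [], [], []],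
  [[], [], [1, 68, 9, 13, 47, 24, 29, 31, 56, 22, 49, 70, 41, 15, 35, 4, 28, 57, 67], [3, 19, 26, 48, 36, 8, 68, 24, 14, 41, 13, 60, 73], [74, 9, 1, 19, 27, 56, 69, 48, 8, 45, 40, 49, 35, 55], [7, 76, 42, 54, 27, 31, 38, 59, 36, 4, 57, 71], [26, 18, 76, 9, 42, 57, 31, 0, 8, 24, 27], [29, 1, 26, 9, 19], [7, 29, 18, 60], [75], [75], [29], [], [], []],
  [[], [], [], [5, 16, 37, 50, 62, 39, 6, 63, 22, 47, 24, 55, 58, 0, 13, 20, 28], [21, 23, 1, 9, 16, 43, 77, 6, 31, 22, 11, 34, 35, 39, 40, 47], [5, 50, 57, 65, 49, 21, 67, 31, 11, 23, 24, 39, 68], [37, 63, 5, 9, 21, 0, 76, 24, 56], [29, 1, 67, 9, 43], [20, 29, 18, 67], [37], [37], [29], [], [], []],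
  [[], [], [], [], [12, 19, 3, 17, 16, 44, 36, 6, 47, 72, 25, 55, 22, 28, 39, 60], [33, 5, 50, 36, 59, 62, 72, 38, 3, 14, 16, 25, 39], [12, 26, 33, 37, 63, 5, 8], [26, 33, 48, 6, 63, 44, 17, 19, 25], [12, 20, 16, 19, 33], [37], [37], [33], [], [], []],
  [[], [], [], [], [], [52, 74, 11, 10, 21, 43, 46, 27, 61, 35], [12, 30, 17, 52, 44, 74, 21, 60], [1, 10, 30, 9, 58, 6, 21, 44, 48], [12, 10, 30, 60, 16, 66], [1, 36, 46, 16], [1, 17, 23, 36], [10], [], [], []],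
  [[], [], [], [], [], [], [2, 33, 5, 57, 11, 14, 21, 69, 27, 61], [2, 10, 67, 45, 13, 49, 64, 21, 38], [7, 2, 10, 21, 27, 52, 72], [7, 36, 46, 45], [7, 14, 31, 46], [10], [], [], []],
  [[], [], [], [], [], [], [], [2, 33, 26, 30, 64, 21, 44, 63], [12, 2, 33, 26, 30], [37], [37], [33], [], [], []],
  [[], [], [], [], [], [], [], [], [29, 2, 48, 26, 30], [1, 29, 2, 13, 30], [1, 17, 52, 67], [10], [], [], []],
  [[], [], [], [], [], [], [], [], [], [7, 12, 20, 29], [7, 12, 20, 52], [10], [], [], []],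
  [[], [], [], [], [], [], [], [], [], [], [37], [29], [], [], []],
  [[], [], [], [], [], [], [], [], [], [], [], [37], [], [], []],
  [[], [], [], [], [], [], [], [], [], [], [], [], [], [], []],
  [[], [], [], [], [], [], [], [], [], [], [], [], [], [], []],
  [[], [], [], [], [], [], [], [], [], [], [], [], [], [], []],
  [[], [], [], [], [], [], [], [], [], [], [], [], [], [], []]]

def covIdx (a b : Nat) : List Nat := (covTab.getD a []).getD b []

def covLL : List (List Nat) := [[0, 1, 2, 3, 6, 8, 11, 13, 14],
  [1, 2, 4, 7, 9, 10, 12, 13, 14],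
  [0, 5, 6, 7, 8, 9, 10, 11, 12],
  [1, 3, 4, 5, 6, 9, 11, 12, 13],
  [0, 1, 2, 3, 4, 5, 8, 10, 12],
  [2, 3, 5, 6, 7, 8, 10, 13, 14],
  [0, 2, 3, 4, 7, 9, 11, 12, 14],
  [0, 1, 5, 8, 9, 10, 11, 13, 14],
  [0, 1, 3, 4, 6, 7, 8, 9, 14],
  [1, 2, 4, 6, 7, 8, 10, 11, 12],
  [0, 4, 5, 7, 8, 11, 12, 13, 14],
  [0, 2, 4, 5, 6, 7, 9, 10, 13],
  [3, 4, 6, 8, 9, 10, 12, 13, 14],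
  [1, 2, 3, 5, 7, 9, 10, 11, 13],
  [0, 1, 3, 5, 6, 10, 11, 12, 14],
  [0, 1, 2, 5, 6, 7, 12, 13, 14],
  [2, 3, 4, 5, 8, 9, 11, 13, 14],
  [0, 3, 4, 6, 7, 10, 11, 12, 13],
  [0, 1, 2, 6, 8, 9, 10, 12, 14],
  [1, 3, 4, 5, 7, 8, 10, 11, 14],
  [0, 2, 3, 8, 9, 10, 11, 12, 13],
  [2, 4, 5, 6, 7, 8, 9, 12, 14],
  [0, 1, 2, 3, 4, 7, 8, 12, 13],
  [0, 2, 4, 5, 6, 10, 11, 13, 14],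
  [1, 2, 3, 5, 6, 7, 9, 11, 12],
  [0, 1, 3, 4, 5, 7, 9, 10, 14],
  [1, 3, 6, 7, 8, 9, 10, 11, 13],
  [0, 1, 4, 5, 6, 8, 9, 12, 13],
  [0, 1, 2, 3, 4, 6, 9, 11, 14],
  [1, 2, 7, 8, 9, 11, 12, 13, 14],
  [0, 4, 6, 7, 8, 9, 10, 11, 14],
  [1, 2, 4, 5, 6, 10, 12, 13, 14],
  [0, 1, 2, 3, 7, 10, 12, 13, 14],
  [3, 5, 6, 7, 8, 11, 12, 13, 14],
  [0, 2, 3, 4, 5, 6, 8, 9, 13],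
  [0, 1, 2, 4, 5, 8, 10, 11, 13],
  [1, 3, 4, 5, 9, 10, 11, 12, 14],
  [2, 3, 6, 9, 10, 11, 12, 13, 14],
  [0, 1, 3, 5, 7, 8, 9, 10, 13],
  [0, 2, 3, 4, 5, 7, 10, 11, 12],
  [0, 1, 2, 4, 6, 7, 11, 12, 13],
  [0, 1, 2, 3, 5, 6, 8, 9, 12],
  [0, 1, 5, 6, 7, 8, 10, 11, 14],
  [0, 2, 4, 5, 7, 8, 9, 10, 11],
  [0, 3, 4, 6, 7, 8, 9, 13, 14],
  [0, 1, 4, 5, 7, 9, 12, 13, 14],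
  [0, 3, 4, 5, 9, 10, 11, 12, 13],
  [1, 2, 3, 4, 5, 6, 8, 10, 14],
  [1, 3, 4, 7, 8, 10, 12, 13, 14],
  [1, 2, 4, 5, 7, 9, 10, 11, 14],
  [2, 3, 5, 7, 8, 9, 11, 12, 13],
  [0, 2, 3, 5, 6, 8, 10, 13, 14],
  [4, 5, 6, 7, 8, 10, 11, 12, 14],
  [0, 2, 3, 4, 7, 8, 11, 12, 14],
  [0, 1, 5, 7, 8, 9, 11, 12, 14],
  [0, 1, 2, 3, 4, 5, 6, 7, 13],
  [1, 2, 4, 6, 8, 9, 10, 11, 14],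
  [1, 2, 5, 6, 9, 11, 12, 13, 14],
  [0, 2, 3, 4, 7, 9, 10, 11, 13],
  [0, 1, 3, 5, 6, 7, 9, 10, 11],
  [1, 3, 4, 6, 8, 10, 11, 12, 13],
  [0, 2, 4, 5, 6, 9, 10, 13, 14],
  [2, 3, 4, 5, 6, 8, 9, 12, 14],
  [2, 3, 6, 7, 8, 9, 10, 12, 13],
  [0, 4, 5, 6, 7, 10, 12, 13, 14],
  [0, 2, 5, 6, 7, 8, 9, 10, 12],
  [0, 2, 3, 4, 5, 8, 9, 11, 12],
  [1, 2, 5, 7, 8, 10, 11, 13, 14],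
  [1, 2, 3, 5, 6, 8, 11, 13, 14],
  [0, 1, 4, 5, 6, 10, 11, 12, 13],
  [0, 1, 2, 3, 4, 7, 9, 12, 14],
  [0, 1, 2, 3, 4, 5, 7, 10, 12],
  [0, 3, 4, 5, 8, 10, 11, 12, 13],
  [0, 1, 3, 4, 7, 8, 9, 13, 14],
  [1, 4, 5, 6, 9, 11, 12, 13, 14],
  [0, 1, 2, 9, 10, 11, 12, 13, 14],
  [1, 2, 5, 6, 7, 11, 12, 13, 14],
  [0, 2, 4, 6, 7, 9, 10, 11, 13]]

theorem covLL_len : covLL.length = covL.length := by decide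

theorem covLL_covL : ∀ i, i < covLL.length → ∀ x ∈ covLL.getD i [], (hx : x < 15) →
    (⟨x, hx⟩ : Fin 15) ∈ covL.getD i ∅ := by decide

theorem key : ∀ a, a < 15 → ∀ b, b < 15 → a < b → ∀ c, c < 15 → b < c →
    ∀ d, d < 15 → c < d → ∀ e, e < 15 → d < e →
    ∃ i ∈ covIdx a b, i < covLL.length ∧
      ([a, b, c, d, e].all (fun x => (covLL.getD i []).contains x)) = true := by decide

/-- `M⁸₁₅` is 5-neighbourly: every 5-element subset of the vertex set is
contained in some facet. -/
theorem five_neighbourly :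
    ∀ s : Finset (Fin 15), s.card = 5 → ∃ Fa ∈ Facets, s ⊆ Fa := by
  intro s hs
  have hlen : (s.sort (· ≤ ·)).length = 5 := by rw [Finset.length_sort]; exact hs
  have hsort : List.Pairwise (· < ·) (s.sort (· ≤ ·)) := (Finset.sortedLT_sort s).pairwise
  have hts : (s.sort (· ≤ ·)).toFinset = s := by simp
  rcases hl : s.sort (· ≤ ·) with _ | ⟨a, _ | ⟨b, _ | ⟨c, _ | ⟨d, _ | ⟨e, _ | ⟨f, t⟩⟩⟩⟩⟩⟩ <;>
    rw [hl] at hlen hsort hts <;> simp only [List.length_nil, List.length_cons,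
      List.pairwise_cons, List.mem_cons, List.mem_singleton, List.not_mem_nil] at hlen hsort ⊢
  pick_goal 6
  · obtain ⟨ha1, hb1, hc1, hd1, -⟩ := hsort
    have hab : a < b := ha1 b (by simp)
    have hbc : b < c := hb1 c (by simp)
    have hcd : c < d := hc1 d (by simp)
    have hde : d < e := hd1 e (by simp)
    have hse : s = ({a, b, c, d, e} : Finset (Fin 15)) := by
      rw [← hts]; simp [List.toFinset_cons]
    obtain ⟨i, -, hilen, hall⟩ := key a.1 a.2 b.1 b.2 hab c.1 c.2 hbc d.1 d.2 hcd e.1 e.2 hde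
    simp only [List.all_cons, List.all_nil, Bool.and_eq_true, and_true] at hall
    obtain ⟨hma, hmb, hmc, hmd, hme⟩ := hall
    have hilen' : i < covL.length := covLL_len ▸ hilen
    have hmem : covL.getD i ∅ ∈ covL := by
      rw [List.getD_eq_getElem covL ∅ hilen']; exact List.getElem_mem _
    refine ⟨covL.getD i ∅, covL_facets _ hmem, ?_⟩
    rw [hse]
    intro x hx
    simp only [Finset.mem_insert, Finset.mem_singleton] at hx
    rcases hx with rfl|rfl|rfl|rfl|rfl
    · exact covLL_covL i hilen _ (List.mem_of_elem_eq_true hma) x.2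
    · exact covLL_covL i hilen _ (List.mem_of_elem_eq_true hmb) x.2
    · exact covLL_covL i hilen _ (List.mem_of_elem_eq_true hmc) x.2
    · exact covLL_covL i hilen _ (List.mem_of_elem_eq_true hmd) x.2
    · exact covLL_covL i hilen _ (List.mem_of_elem_eq_true hme) x.2
  all_goals omega
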